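/- arXiv:1809.06051 — 2 statements merged into one kernel-verified Lean document; each statement's English description precedes it below -/
import Mathlib

section
/- Let (W,ω) and (V,υ) be Bessel fusion sequences in H, m ∈ ℓ∞(I), R ∈ ℓ∞(I,B(H)), and assume that the Bessel fusion multiplier M_{mR,V,W} is invertible on H. Then each of the four families (W,ω), (V,υ), (W, {|m_i|ω_i}) and (V, {|m_i|υ_i}) satisfies the fusion frame inequalities: for instance, there exist constants 0 < α' ≤ β' with α'‖x‖² ≤ Σ_{i∈I} |m_i|²ω_i²‖P_{W_i}x‖² ≤ β'‖x‖² for all x ∈ H, and likewise for the other three families. -/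
noncomputable section

open ContinuousLinearMap

/-- Orthogonal projection onto a closed subspace, as an operator on `H`. -/
def fproj {H : Type*} [NormedAddCommGroup H] [InnerProductSpace ℂ H] [CompleteSpace H]
    (W : Submodule ℂ H) (hW : IsClosed (W : Set H)) : H →L[ℂ] H :=
  haveI : CompleteSpace W := hW.completeSpace_coe
  W.subtypeL.comp (W.orthogonalProjection)

/-- The family of closed subspaces `W` with weights `c` satisfies the fusion frame
inequalities. -/
def FusionFrameIneq {H : Type*} [NormedAddCommGroup H] [InnerProductSpace ℂ H]
    [CompleteSpace H] {I : Type*}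
    (W : I → Submodule ℂ H) (hW : ∀ i, IsClosed ((W i) : Set H)) (c : I → ℝ) : Prop :=
  ∃ a b : ℝ, 0 < a ∧ a ≤ b ∧ ∀ x : H, ∃ s : ℝ,
    HasSum (fun i => c i ^ 2 * ‖fproj (W i) (hW i) x‖ ^ 2) s ∧
    a * ‖x‖ ^ 2 ≤ s ∧ s ≤ b * ‖x‖ ^ 2

private lemma fproj_inner {H : Type*} [NormedAddCommGroup H] [InnerProductSpace ℂ H]
    [CompleteSpace H] (W : Submodule ℂ H) (hW : IsClosed (W : Set H)) (x y : H) :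
    (inner ℂ (fproj W hW x) y : ℂ) = inner ℂ x (fproj W hW y) := by
  haveI : CompleteSpace W := hW.completeSpace_coe
  exact Submodule.inner_starProjection_left_eq_right W x y

private lemma cs_tsum {I : Type*} (f g : I → ℝ) (hf : ∀ i, 0 ≤ f i) (hg : ∀ i, 0 ≤ g i)
    {Sf Sg : ℝ} (hSf : HasSum (fun i => f i ^ 2) Sf) (hSg : HasSum (fun i => g i ^ 2) Sg)
    (h : I → ℂ) {s : ℂ} (hs : HasSum h s) (hle : ∀ i, ‖h i‖ ≤ f i * g i) :
    ‖s‖ ≤ Real.sqrt Sf * Real.sqrt Sg := by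
  have hfg : Summable (fun i => f i * g i) := by
    refine Summable.of_nonneg_of_le (fun i => mul_nonneg (hf i) (hg i))
      (fun i => ?_) (hSf.summable.add hSg.summable)
    nlinarith [sq_nonneg (f i - g i), mul_nonneg (hf i) (hg i)]
  have hn : Summable (fun i => ‖h i‖) :=
    Summable.of_nonneg_of_le (fun i => norm_nonneg _) hle hfg
  have h1 : ‖s‖ ≤ ∑' i, ‖h i‖ := by
    rw [← hs.tsum_eq]; exact norm_tsum_le_tsum_norm hn
  have h2 : ∑' i, ‖h i‖ ≤ ∑' i, f i * g i := Summable.tsum_le_tsum hle hn hfg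
  have hSf0 : 0 ≤ Sf := hSf.nonneg fun i => sq_nonneg _
  have hSg0 : 0 ≤ Sg := hSg.nonneg fun i => sq_nonneg _
  have h3 : ∑' i, f i * g i ≤ Real.sqrt Sf * Real.sqrt Sg := by
    refine Summable.tsum_le_of_sum_le hfg fun t => ?_
    have hcs := Finset.sum_mul_sq_le_sq_mul_sq t f g
    have hf2 : ∑ i ∈ t, f i ^ 2 ≤ Sf := sum_le_hasSum t (fun i _ => sq_nonneg _) hSf
    have hg2 : ∑ i ∈ t, g i ^ 2 ≤ Sg := sum_le_hasSum t (fun i _ => sq_nonneg _) hSg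
    have hsum0 : 0 ≤ ∑ i ∈ t, f i * g i :=
      Finset.sum_nonneg fun i _ => mul_nonneg (hf i) (hg i)
    have : (∑ i ∈ t, f i * g i) ^ 2 ≤ Sf * Sg := by
      refine hcs.trans (mul_le_mul hf2 hg2 (Finset.sum_nonneg fun i _ => sq_nonneg _) hSf0)
    calc ∑ i ∈ t, f i * g i = Real.sqrt ((∑ i ∈ t, f i * g i) ^ 2) :=
          (Real.sqrt_sq hsum0).symm
      _ ≤ Real.sqrt (Sf * Sg) := Real.sqrt_le_sqrt this
      _ = Real.sqrt Sf * Real.sqrt Sg := Real.sqrt_mul hSf0 _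
  linarith

private lemma bessel_scale {H : Type*} [NormedAddCommGroup H] [InnerProductSpace ℂ H]
    [CompleteSpace H] {I : Type*} (U : I → Submodule ℂ H)
    (hU : ∀ i, IsClosed ((U i) : Set H)) (c : I → ℝ) (β : ℝ)
    (hβ : ∀ x : H, ∃ s : ℝ,
      HasSum (fun i => c i ^ 2 * ‖fproj (U i) (hU i) x‖ ^ 2) s ∧ s ≤ β * ‖x‖ ^ 2)
    (t : I → ℝ) (tB : ℝ) (htB0 : 0 ≤ tB) (ht : ∀ i, |t i| ≤ tB) :
    ∀ x : H, ∃ s : ℝ,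
      HasSum (fun i => (t i * c i) ^ 2 * ‖fproj (U i) (hU i) x‖ ^ 2) s ∧
      s ≤ (tB ^ 2 * max β 0) * ‖x‖ ^ 2 := by
  intro x
  obtain ⟨s, hs, hsle⟩ := hβ x
  have hterm : ∀ i, (t i * c i) ^ 2 * ‖fproj (U i) (hU i) x‖ ^ 2
      ≤ tB ^ 2 * (c i ^ 2 * ‖fproj (U i) (hU i) x‖ ^ 2) := by
    intro i
    have h1 : (t i) ^ 2 ≤ tB ^ 2 := sq_le_sq' (neg_le_of_abs_le (ht i)) (le_of_abs_le (ht i))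
    calc (t i * c i) ^ 2 * ‖fproj (U i) (hU i) x‖ ^ 2
        = t i ^ 2 * (c i ^ 2 * ‖fproj (U i) (hU i) x‖ ^ 2) := by ring
      _ ≤ tB ^ 2 * (c i ^ 2 * ‖fproj (U i) (hU i) x‖ ^ 2) :=
          mul_le_mul_of_nonneg_right h1 (mul_nonneg (sq_nonneg _) (sq_nonneg _))
  have hsum2 : Summable (fun i => (t i * c i) ^ 2 * ‖fproj (U i) (hU i) x‖ ^ 2) :=
    Summable.of_nonneg_of_le (fun i => mul_nonneg (sq_nonneg _) (sq_nonneg _)) hterm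
      (hs.summable.mul_left _)
  refine ⟨∑' i, (t i * c i) ^ 2 * ‖fproj (U i) (hU i) x‖ ^ 2, hsum2.hasSum, ?_⟩
  have h2 : ∑' i, (t i * c i) ^ 2 * ‖fproj (U i) (hU i) x‖ ^ 2
      ≤ ∑' i, tB ^ 2 * (c i ^ 2 * ‖fproj (U i) (hU i) x‖ ^ 2) :=
    Summable.tsum_le_tsum hterm hsum2 (hs.summable.mul_left _)
  have h3 : ∑' i, tB ^ 2 * (c i ^ 2 * ‖fproj (U i) (hU i) x‖ ^ 2) = tB ^ 2 * s := by
    rw [tsum_mul_left, hs.tsum_eq]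
  have h4 : s ≤ max β 0 * ‖x‖ ^ 2 :=
    hsle.trans (mul_le_mul_of_nonneg_right (le_max_left _ _) (sq_nonneg _))
  have h5 : tB ^ 2 * s ≤ tB ^ 2 * (max β 0 * ‖x‖ ^ 2) :=
    mul_le_mul_of_nonneg_left h4 (sq_nonneg _)
  calc _ ≤ tB ^ 2 * s := h2.trans_eq h3
    _ ≤ _ := by linarith [h5]

private lemma frame_case {H : Type*} [NormedAddCommGroup H] [InnerProductSpace ℂ H]
    [CompleteSpace H] {I : Type*}
    (U U' : I → Submodule ℂ H) (hU : ∀ i, IsClosed ((U i) : Set H))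
    (hU' : ∀ i, IsClosed ((U' i) : Set H))
    (c c' : I → ℝ) (hc : ∀ i, 0 ≤ c i) (hc' : ∀ i, 0 ≤ c' i)
    (βc β' : ℝ)
    (hβc : ∀ x : H, ∃ s : ℝ,
      HasSum (fun i => c i ^ 2 * ‖fproj (U i) (hU i) x‖ ^ 2) s ∧ s ≤ βc * ‖x‖ ^ 2)
    (hβ' : ∀ x : H, ∃ s : ℝ,
      HasSum (fun i => c' i ^ 2 * ‖fproj (U' i) (hU' i) x‖ ^ 2) s ∧ s ≤ β' * ‖x‖ ^ 2)
    (T : H →L[ℂ] H)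
    (hid : ∀ x : H, ∃ h : I → ℂ, HasSum h ((‖x‖ : ℂ) ^ 2) ∧
      ∀ i, ‖h i‖ ≤ (c i * ‖fproj (U i) (hU i) x‖) * (c' i * ‖fproj (U' i) (hU' i) (T x)‖)) :
    FusionFrameIneq U hU c := by
  set D : ℝ := Real.sqrt (max β' 0) * ‖T‖ with hD
  have hD0 : 0 ≤ D := mul_nonneg (Real.sqrt_nonneg _) (norm_nonneg _)
  set D' : ℝ := D + 1 with hD'
  have hD'0 : 0 < D' := by positivity
  refine ⟨1 / D' ^ 2, max βc (1 / D' ^ 2), by positivity, le_max_right _ _, fun x => ?_⟩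
  obtain ⟨s, hs, hsle⟩ := hβc x
  have hs0 : 0 ≤ s := hs.nonneg fun i => mul_nonneg (sq_nonneg _) (sq_nonneg _)
  refine ⟨s, hs, ?_, hsle.trans
    (mul_le_mul_of_nonneg_right (le_max_left _ _) (sq_nonneg _))⟩
  -- lower bound
  obtain ⟨h, hh, hhle⟩ := hid x
  obtain ⟨Sg, hSg, hSgle⟩ := hβ' (T x)
  have hSf : HasSum (fun i => (c i * ‖fproj (U i) (hU i) x‖) ^ 2) s := by
    simpa [mul_pow] using hs
  have hSg' : HasSum (fun i => (c' i * ‖fproj (U' i) (hU' i) (T x)‖) ^ 2) Sg := by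
    simpa [mul_pow] using hSg
  have hmain : ‖x‖ ^ 2 ≤ Real.sqrt s * Real.sqrt Sg := by
    have := cs_tsum _ _ (fun i => mul_nonneg (hc i) (norm_nonneg _))
      (fun i => mul_nonneg (hc' i) (norm_nonneg _)) hSf hSg' h hh hhle
    calc ‖x‖ ^ 2 = ‖((‖x‖ : ℂ)) ^ 2‖ := by
          rw [norm_pow]; simp
      _ ≤ _ := this
  have hSgD : Real.sqrt Sg ≤ D * ‖x‖ := by
    have h1 : Sg ≤ max β' 0 * (‖T‖ * ‖x‖) ^ 2 := by
      have h2 : Sg ≤ max β' 0 * ‖T x‖ ^ 2 :=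
        hSgle.trans (mul_le_mul_of_nonneg_right (le_max_left _ _) (sq_nonneg _))
      refine h2.trans (mul_le_mul_of_nonneg_left ?_ (le_max_right β' 0))
      have := T.le_opNorm x
      nlinarith [norm_nonneg (T x), norm_nonneg x, norm_nonneg T]
    calc Real.sqrt Sg ≤ Real.sqrt (max β' 0 * (‖T‖ * ‖x‖) ^ 2) := Real.sqrt_le_sqrt h1
      _ = Real.sqrt (max β' 0) * (‖T‖ * ‖x‖) := by
          rw [Real.sqrt_mul (le_max_right β' 0),
            Real.sqrt_sq (mul_nonneg (norm_nonneg _) (norm_nonneg _))]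
      _ = D * ‖x‖ := by rw [hD]; ring
  have hfinal : ‖x‖ ^ 2 ≤ Real.sqrt s * (D' * ‖x‖) := by
    have h1 : Real.sqrt s * Real.sqrt Sg ≤ Real.sqrt s * (D * ‖x‖) :=
      mul_le_mul_of_nonneg_left hSgD (Real.sqrt_nonneg _)
    have h2 : Real.sqrt s * (D * ‖x‖) ≤ Real.sqrt s * (D' * ‖x‖) := by
      have : D * ‖x‖ ≤ D' * ‖x‖ :=
        mul_le_mul_of_nonneg_right (by simp [hD']) (norm_nonneg _)
      exact mul_le_mul_of_nonneg_left this (Real.sqrt_nonneg _)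
    linarith
  -- from ‖x‖² ≤ √s · D'‖x‖ derive ‖x‖²/D'² ≤ s
  have hsq : Real.sqrt s ^ 2 = s := Real.sq_sqrt hs0
  rcases eq_or_ne x 0 with rfl | hx
  · simpa using hs0
  · have hxn : 0 < ‖x‖ := norm_pos_iff.mpr hx
    have h1 : ‖x‖ ≤ Real.sqrt s * D' := by
      have := hfinal
      rw [pow_two] at this
      nlinarith [Real.sqrt_nonneg s]
    have h2 : ‖x‖ ^ 2 ≤ s * D' ^ 2 := by nlinarith [Real.sqrt_nonneg s]
    rw [div_mul_eq_mul_div, div_le_iff₀ (by positivity)]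
    nlinarith

/-- If the Bessel fusion multiplier `M_{mR,V,W}` is invertible, then `(W,ω)`,
`(V,υ)`, `(W,{|m_i|ω_i})` and `(V,{|m_i|υ_i})` all satisfy the fusion frame inequalities. -/
theorem fusionFrame_of_invertible_multiplier
    {H : Type*} [NormedAddCommGroup H] [InnerProductSpace ℂ H] [CompleteSpace H]
    [TopologicalSpace.SeparableSpace H]
    {I : Type*} [Countable I]
    (W V : I → Submodule ℂ H)
    (hW : ∀ i, IsClosed ((W i) : Set H)) (hV : ∀ i, IsClosed ((V i) : Set H))
    (ω υ : I → ℝ)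
    (hωseq : ∀ i, 0 ≤ ω i ∧ (ω i = 0 ↔ W i = ⊥))
    (hυseq : ∀ i, 0 ≤ υ i ∧ (υ i = 0 ↔ V i = ⊥))
    (βW βV : ℝ)
    (hWB : ∀ x : H, ∃ s : ℝ,
      HasSum (fun i => ω i ^ 2 * ‖fproj (W i) (hW i) x‖ ^ 2) s ∧ s ≤ βW * ‖x‖ ^ 2)
    (hVB : ∀ x : H, ∃ s : ℝ,
      HasSum (fun i => υ i ^ 2 * ‖fproj (V i) (hV i) x‖ ^ 2) s ∧ s ≤ βV * ‖x‖ ^ 2)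
    (m : I → ℂ) (hm : BddAbove (Set.range fun i => ‖m i‖))
    (R : I → H →L[ℂ] H) (hR : BddAbove (Set.range fun i => ‖R i‖))
    -- the multiplier M_{mR,V,W} and its invertibility
    (M : H →L[ℂ] H)
    (hM : ∀ x : H, HasSum
      (fun i => m i • (υ i * ω i) • fproj (V i) (hV i) ((R i) (fproj (W i) (hW i) x))) (M x))
    (hMinv : ∃ N : H →L[ℂ] H, M ∘L N = 1 ∧ N ∘L M = 1) :
    FusionFrameIneq W hW ω ∧ FusionFrameIneq V hV υ ∧
    FusionFrameIneq W hW (fun i => ‖m i‖ * ω i) ∧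
    FusionFrameIneq V hV (fun i => ‖m i‖ * υ i) := by
  obtain ⟨N, hMN, hNM⟩ := hMinv
  set mB : ℝ := max (⨆ i, ‖m i‖) 0 with hmBdef
  have hmB : ∀ i, ‖m i‖ ≤ mB := fun i => (le_ciSup hm i).trans (le_max_left _ _)
  have mB0 : 0 ≤ mB := le_max_right _ _
  set RB : ℝ := max (⨆ i, ‖R i‖) 0 with hRBdef
  have hRB : ∀ i, ‖R i‖ ≤ RB := fun i => (le_ciSup hR i).trans (le_max_left _ _)
  have RB0 : 0 ≤ RB := le_max_right _ _
  -- termwise norm estimate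
  have hterm : ∀ (y z : H) (i : I),
      ‖(inner ℂ y (m i • (υ i * ω i) • fproj (V i) (hV i) ((R i) (fproj (W i) (hW i) z))) : ℂ)‖
      ≤ ‖m i‖ * (υ i * ω i * (‖fproj (V i) (hV i) y‖ * (RB * ‖fproj (W i) (hW i) z‖))) := by
    intro y z i
    set w := (R i) (fproj (W i) (hW i) z) with hw
    have hυω : (0:ℝ) ≤ υ i * ω i := mul_nonneg (hυseq i).1 (hωseq i).1
    have hval : (inner ℂ y (m i • (υ i * ω i) • fproj (V i) (hV i) w) : ℂ)
        = m i * (((υ i * ω i : ℝ) : ℂ) * inner ℂ y (fproj (V i) (hV i) w)) := by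
      rw [← Complex.coe_smul, inner_smul_right, inner_smul_right]
    rw [hval, norm_mul, norm_mul]
    have h3 : ‖(((υ i * ω i : ℝ)) : ℂ)‖ = υ i * ω i := by
      simp [Real.norm_eq_abs, abs_mul, abs_of_nonneg (hυseq i).1, abs_of_nonneg (hωseq i).1]
    rw [h3]
    have h1 : ‖(inner ℂ y (fproj (V i) (hV i) w) : ℂ)‖ ≤ ‖fproj (V i) (hV i) y‖ * ‖w‖ := by
      rw [← fproj_inner]; exact norm_inner_le_norm _ _
    have h2 : ‖w‖ ≤ RB * ‖fproj (W i) (hW i) z‖ := by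
      refine ((R i).le_opNorm _).trans ?_
      exact mul_le_mul_of_nonneg_right (hRB i) (norm_nonneg _)
    have h4 : ‖(inner ℂ y (fproj (V i) (hV i) w) : ℂ)‖
        ≤ ‖fproj (V i) (hV i) y‖ * (RB * ‖fproj (W i) (hW i) z‖) :=
      h1.trans (mul_le_mul_of_nonneg_left h2 (norm_nonneg _))
    have h5 : υ i * ω i * ‖(inner ℂ y (fproj (V i) (hV i) w) : ℂ)‖
        ≤ υ i * ω i * (‖fproj (V i) (hV i) y‖ * (RB * ‖fproj (W i) (hW i) z‖)) :=
      mul_le_mul_of_nonneg_left h4 hυω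
    calc ‖m i‖ * (υ i * ω i * ‖(inner ℂ y (fproj (V i) (hV i) w) : ℂ)‖)
        ≤ ‖m i‖ * (υ i * ω i * (‖fproj (V i) (hV i) y‖ * (RB * ‖fproj (W i) (hW i) z‖))) :=
          mul_le_mul_of_nonneg_left h5 (norm_nonneg _)
      _ = _ := rfl
  -- the summed inner ℂ products
  have hsum : ∀ y z : H, HasSum
      (fun i => (inner ℂ y (m i • (υ i * ω i) •
        fproj (V i) (hV i) ((R i) (fproj (W i) (hW i) z))) : ℂ)) (inner ℂ y (M z)) := by
    intro y z
    exact (innerSL ℂ y).hasSum (hM z)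
  have hNMx : ∀ x : H, N (M x) = x := by
    intro x
    have := ContinuousLinearMap.ext_iff.mp hNM x
    simpa using this
  have hMNx : ∀ x : H, M (N x) = x := by
    intro x
    have := ContinuousLinearMap.ext_iff.mp hMN x
    simpa using this
  set Nd : H →L[ℂ] H := ContinuousLinearMap.adjoint N with hNd
  have hvalW : ∀ x : H, (inner ℂ (Nd x) (M x) : ℂ) = (‖x‖ : ℂ) ^ 2 := by
    intro x
    rw [hNd, ContinuousLinearMap.adjoint_inner_left, hNMx, inner_self_eq_norm_sq_to_K]
    norm_cast
  have hvalV : ∀ x : H, (inner ℂ x (M (N x)) : ℂ) = (‖x‖ : ℂ) ^ 2 := by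
    intro x
    rw [hMNx, inner_self_eq_norm_sq_to_K]
    norm_cast
  -- scaled Bessel bounds
  have hVB1 := bessel_scale V hV υ βV hVB (fun _ => mB * RB) (mB * RB)
    (mul_nonneg mB0 RB0) (fun i => by rw [abs_of_nonneg (mul_nonneg mB0 RB0)])
  have hVB2 := bessel_scale V hV υ βV hVB (fun _ => RB) RB RB0
    (fun i => by rw [abs_of_nonneg RB0])
  have hWB1 := bessel_scale W hW ω βW hWB (fun _ => mB * RB) (mB * RB)
    (mul_nonneg mB0 RB0) (fun i => by rw [abs_of_nonneg (mul_nonneg mB0 RB0)])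
  have hWB2 := bessel_scale W hW ω βW hWB (fun _ => RB) RB RB0
    (fun i => by rw [abs_of_nonneg RB0])
  have hWBm := bessel_scale W hW ω βW hWB (fun i => ‖m i‖) mB mB0
    (fun i => by rw [abs_of_nonneg (norm_nonneg _)]; exact hmB i)
  have hVBm := bessel_scale V hV υ βV hVB (fun i => ‖m i‖) mB mB0
    (fun i => by rw [abs_of_nonneg (norm_nonneg _)]; exact hmB i)
  refine ⟨?_, ?_, ?_, ?_⟩
  · -- (W, ω)
    refine frame_case W V hW hV ω (fun i => mB * RB * υ i) (fun i => (hωseq i).1)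
      (fun i => mul_nonneg (mul_nonneg mB0 RB0) (hυseq i).1) βW _ hWB hVB1 Nd ?_
    intro x
    refine ⟨_, (hvalW x) ▸ hsum (Nd x) x, fun i => ?_⟩
    refine (hterm (Nd x) x i).trans ?_
    have hnn : (0:ℝ) ≤ υ i * ω i * (‖fproj (V i) (hV i) (Nd x)‖ * (RB * ‖fproj (W i) (hW i) x‖)) :=
      mul_nonneg (mul_nonneg (hυseq i).1 (hωseq i).1)
        (mul_nonneg (norm_nonneg _) (mul_nonneg RB0 (norm_nonneg _)))
    calc _ ≤ mB * (υ i * ω i * (‖fproj (V i) (hV i) (Nd x)‖ * (RB * ‖fproj (W i) (hW i) x‖))) :=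
          mul_le_mul_of_nonneg_right (hmB i) hnn
      _ = (ω i * ‖fproj (W i) (hW i) x‖) * (mB * RB * υ i * ‖fproj (V i) (hV i) (Nd x)‖) := by
          ring
  · -- (V, υ)
    refine frame_case V W hV hW υ (fun i => mB * RB * ω i) (fun i => (hυseq i).1)
      (fun i => mul_nonneg (mul_nonneg mB0 RB0) (hωseq i).1) βV _ hVB hWB1 N ?_
    intro x
    refine ⟨_, (hvalV x) ▸ hsum x (N x), fun i => ?_⟩
    refine (hterm x (N x) i).trans ?_
    have hnn : (0:ℝ) ≤ υ i * ω i * (‖fproj (V i) (hV i) x‖ * (RB * ‖fproj (W i) (hW i) (N x)‖)) :=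
      mul_nonneg (mul_nonneg (hυseq i).1 (hωseq i).1)
        (mul_nonneg (norm_nonneg _) (mul_nonneg RB0 (norm_nonneg _)))
    calc _ ≤ mB * (υ i * ω i * (‖fproj (V i) (hV i) x‖ * (RB * ‖fproj (W i) (hW i) (N x)‖))) :=
          mul_le_mul_of_nonneg_right (hmB i) hnn
      _ = (υ i * ‖fproj (V i) (hV i) x‖) * (mB * RB * ω i * ‖fproj (W i) (hW i) (N x)‖) := by
          ring
  · -- (W, ‖m‖ω)
    refine frame_case W V hW hV (fun i => ‖m i‖ * ω i) (fun i => RB * υ i)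
      (fun i => mul_nonneg (norm_nonneg _) (hωseq i).1)
      (fun i => mul_nonneg RB0 (hυseq i).1) _ _ hWBm hVB2 Nd ?_
    intro x
    refine ⟨_, (hvalW x) ▸ hsum (Nd x) x, fun i => ?_⟩
    refine (hterm (Nd x) x i).trans ?_
    calc _ = (‖m i‖ * ω i * ‖fproj (W i) (hW i) x‖) * (RB * υ i * ‖fproj (V i) (hV i) (Nd x)‖) := by
          ring
      _ ≤ _ := le_refl _
  · -- (V, ‖m‖υ)
    refine frame_case V W hV hW (fun i => ‖m i‖ * υ i) (fun i => RB * ω i)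
      (fun i => mul_nonneg (norm_nonneg _) (hυseq i).1)
      (fun i => mul_nonneg RB0 (hωseq i).1) _ _ hVBm hWB2 N ?_
    intro x
    refine ⟨_, (hvalV x) ▸ hsum x (N x), fun i => ?_⟩
    refine (hterm x (N x) i).trans ?_
    calc _ = (‖m i‖ * υ i * ‖fproj (V i) (hV i) x‖) * (RB * ω i * ‖fproj (W i) (hW i) (N x)‖) := by
          ring
      _ ≤ _ := le_refl _
end
end

section
/- Let (W,ω) and (V,υ) be Bessel fusion sequences in H, and let m ∈ ℓ∞(I) and R ∈ ℓ∞(I,B(H)) satisfy condition C(m,R). If the Bessel fusion multiplier M_{mR,V,W} is invertible on H, then (W,ω) and (V,υ) have the same excess: dim ker(T*_{W,ω}) = dim ker(T*_{V,υ}). -/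
noncomputable section

open ContinuousLinearMap
open scoped ENNReal NNReal

section Helpers

variable {H : Type*} [NormedAddCommGroup H] [InnerProductSpace ℂ H] [CompleteSpace H]
variable {I : Type*}

private lemma rpow_toReal_two (a : ℝ) : a ^ ((2:ℝ≥0∞)).toReal = a ^ (2:ℕ) := by
  rw [ENNReal.toReal_ofNat, show ((2:ℝ)) = ((2:ℕ):ℝ) by norm_num, Real.rpow_natCast]

theorem memℓp_two_comp (T : I → H →ₗ[ℂ] H) {C : ℝ} (hC0 : 0 ≤ C)
    (hC : ∀ i x, ‖T i x‖ ≤ C * ‖x‖) (x : lp (fun _ : I => H) 2) :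
    Memℓp (fun i => T i (x i)) 2 := by
  have hx : Summable fun i => ‖x i‖ ^ ((2:ℝ≥0∞)).toReal :=
    (lp.memℓp x).summable (by norm_num)
  apply memℓp_gen
  refine Summable.of_nonneg_of_le (fun i => by positivity) (fun i => ?_)
    (hx.mul_left (C ^ (2:ℕ)))
  rw [rpow_toReal_two, rpow_toReal_two]
  calc ‖T i (x i)‖ ^ (2:ℕ) ≤ (C * ‖x i‖) ^ (2:ℕ) :=
        pow_le_pow_left₀ (norm_nonneg _) (hC i _) 2
    _ = C ^ (2:ℕ) * ‖x i‖ ^ (2:ℕ) := by ring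

theorem lp_norm_le_of_pointwise {f g : lp (fun _ : I => H) 2} {C : ℝ} (hC0 : 0 ≤ C)
    (h : ∀ i, ‖f i‖ ≤ C * ‖g i‖) : ‖f‖ ≤ C * ‖g‖ := by
  have h1 := lp.hasSum_norm (p := 2) (E := fun _ : I => H) (by norm_num) f
  have h2 := (lp.hasSum_norm (p := 2) (E := fun _ : I => H) (by norm_num) g).mul_left
    (C ^ ((2:ℝ≥0∞)).toReal)
  have hle : ‖f‖ ^ ((2:ℝ≥0∞)).toReal ≤
      C ^ ((2:ℝ≥0∞)).toReal * ‖g‖ ^ ((2:ℝ≥0∞)).toReal := by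
    refine hasSum_le (fun i => ?_) h1 h2
    rw [rpow_toReal_two, rpow_toReal_two, rpow_toReal_two, ← mul_pow]
    exact pow_le_pow_left₀ (norm_nonneg _) (h i) 2
  rw [rpow_toReal_two, rpow_toReal_two, rpow_toReal_two, ← mul_pow] at hle
  exact (pow_le_pow_iff_left₀ (norm_nonneg f) (by positivity) two_ne_zero).mp hle

/-- The diagonal operator on `ℓ²(I, H)` given by a uniformly bounded family of linear maps. -/
def opD (T : I → H →ₗ[ℂ] H) {C : ℝ} (hC0 : 0 ≤ C) (hC : ∀ i x, ‖T i x‖ ≤ C * ‖x‖) :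
    lp (fun _ : I => H) 2 →L[ℂ] lp (fun _ : I => H) 2 :=
  LinearMap.mkContinuous
    { toFun := fun x => ⟨fun i => T i (x i), memℓp_two_comp T hC0 hC x⟩
      map_add' := fun x y => lp.ext (funext fun i => by
        simp only [lp.coeFn_add, Pi.add_apply]
        exact map_add (T i) _ _)
      map_smul' := fun c x => lp.ext (funext fun i => by
        simp only [lp.coeFn_smul, Pi.smul_apply, RingHom.id_apply]
        exact map_smul (T i) _ _) }
    C
    (fun x => lp_norm_le_of_pointwise hC0 (fun i => hC i (x i)))

@[simp] theorem opD_apply (T : I → H →ₗ[ℂ] H) {C : ℝ} (hC0 : 0 ≤ C)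
    (hC : ∀ i x, ‖T i x‖ ≤ C * ‖x‖) (x : lp (fun _ : I => H) 2) (i : I) :
    (opD T hC0 hC x) i = T i (x i) := rfl

theorem memℓp_synth (W : I → Submodule ℂ H) (hW : ∀ i, IsClosed ((W i) : Set H)) (ω : I → ℝ)
    (hω : ∀ i, 0 ≤ ω i) {β : ℝ}
    (hB : ∀ x : H, ∃ s, HasSum (fun i => ω i ^ 2 * ‖fproj (W i) (hW i) x‖ ^ 2) s ∧ s ≤ β * ‖x‖ ^ 2)
    (x : H) : Memℓp (fun i => ω i • fproj (W i) (hW i) x) 2 := by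
  obtain ⟨s, hs, -⟩ := hB x
  apply memℓp_gen
  refine hs.summable.congr (fun i => ?_)
  rw [rpow_toReal_two, norm_smul, Real.norm_eq_abs, abs_of_nonneg (hω i), mul_pow]

theorem synth_hasSum_normsq (W : I → Submodule ℂ H) (hW : ∀ i, IsClosed ((W i) : Set H))
    (ω : I → ℝ) (hω : ∀ i, 0 ≤ ω i) (f : lp (fun _ : I => H) 2) (x : H)
    (hf : ∀ i, f i = ω i • fproj (W i) (hW i) x) :
    HasSum (fun i => ω i ^ 2 * ‖fproj (W i) (hW i) x‖ ^ 2) (‖f‖ ^ (2:ℕ)) := by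
  have h1 := lp.hasSum_norm (p := 2) (E := fun _ : I => H) (by norm_num) f
  rw [rpow_toReal_two] at h1
  refine h1.congr_fun (fun i => ?_)
  rw [hf i, rpow_toReal_two, norm_smul, Real.norm_eq_abs, abs_of_nonneg (hω i), mul_pow]

theorem synth_norm_le (W : I → Submodule ℂ H) (hW : ∀ i, IsClosed ((W i) : Set H)) (ω : I → ℝ)
    (hω : ∀ i, 0 ≤ ω i) {β : ℝ}
    (hB : ∀ x : H, ∃ s, HasSum (fun i => ω i ^ 2 * ‖fproj (W i) (hW i) x‖ ^ 2) s ∧ s ≤ β * ‖x‖ ^ 2)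
    (f : lp (fun _ : I => H) 2) (x : H) (hf : ∀ i, f i = ω i • fproj (W i) (hW i) x) :
    ‖f‖ ≤ Real.sqrt (max β 0) * ‖x‖ := by
  obtain ⟨s, hs, hsle⟩ := hB x
  have h1 := synth_hasSum_normsq W hW ω hω f x hf
  have h2 : ‖f‖ ^ (2:ℕ) = s := h1.unique hs
  have h3 : ‖f‖ ^ (2:ℕ) ≤ (Real.sqrt (max β 0) * ‖x‖) ^ (2:ℕ) := by
    rw [mul_pow, Real.sq_sqrt (le_max_right β 0), h2]
    calc s ≤ β * ‖x‖ ^ 2 := hsle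
      _ ≤ max β 0 * ‖x‖ ^ 2 := by
        gcongr
        exact le_max_left β 0
  exact (pow_le_pow_iff_left₀ (norm_nonneg f) (by positivity) two_ne_zero).mp h3

/-- The adjoint of the analysis operator (i.e. the map `x ↦ {ω i • P_{W i} x}`) of a Bessel
fusion sequence, as a continuous linear map `H → ℓ²(I, H)`. -/
def synthAdj (W : I → Submodule ℂ H) (hW : ∀ i, IsClosed ((W i) : Set H)) (ω : I → ℝ)
    (hω : ∀ i, 0 ≤ ω i) {β : ℝ}
    (hB : ∀ x : H, ∃ s, HasSum (fun i => ω i ^ 2 * ‖fproj (W i) (hW i) x‖ ^ 2) s ∧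
      s ≤ β * ‖x‖ ^ 2) :
    H →L[ℂ] lp (fun _ : I => H) 2 :=
  LinearMap.mkContinuous
    { toFun := fun x => ⟨fun i => ω i • fproj (W i) (hW i) x, memℓp_synth W hW ω hω hB x⟩
      map_add' := fun x y => lp.ext (funext fun i => by
        simp only [lp.coeFn_add, Pi.add_apply, map_add, smul_add])
      map_smul' := fun c x => lp.ext (funext fun i => by
        simp only [lp.coeFn_smul, Pi.smul_apply, RingHom.id_apply, map_smul]
        exact (smul_comm _ _ _)) }
    (Real.sqrt (max β 0))
    (fun x => synth_norm_le W hW ω hω hB _ x (fun i => rfl))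

@[simp] theorem synthAdj_apply (W : I → Submodule ℂ H) (hW : ∀ i, IsClosed ((W i) : Set H))
    (ω : I → ℝ) (hω : ∀ i, 0 ≤ ω i) {β : ℝ}
    (hB : ∀ x : H, ∃ s, HasSum (fun i => ω i ^ 2 * ‖fproj (W i) (hW i) x‖ ^ 2) s ∧
      s ≤ β * ‖x‖ ^ 2) (x : H) (i : I) :
    (synthAdj W hW ω hω hB x) i = ω i • fproj (W i) (hW i) x := rfl

theorem fproj_inner_s11 (Wi : Submodule ℂ H) (h : IsClosed (Wi : Set H)) (u v : H) :
    (inner ℂ (fproj Wi h u) v : ℂ) = inner ℂ u (fproj Wi h v) := by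
  haveI : CompleteSpace Wi := h.completeSpace_coe
  exact Wi.inner_starProjection_left_eq_right u v

end Helpers

/-- Condition `C(m,R)` with constants `γ, δ`. -/
def CondC {H : Type*} [NormedAddCommGroup H] [InnerProductSpace ℂ H] [CompleteSpace H]
    {I : Type*} (m : I → ℂ) (R : I → H →L[ℂ] H) (γ δ : ℝ) : Prop :=
  0 < γ ∧ 0 < δ ∧ ∀ (j : I) (x : H),
    γ * ‖x‖ ≤ ‖(starRingEnd ℂ) (m j) • (ContinuousLinearMap.adjoint (R j)) x‖ ∧
    ‖(starRingEnd ℂ) (m j) • (ContinuousLinearMap.adjoint (R j)) x‖ ≤ δ * ‖x‖ ∧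
    γ * ‖x‖ ≤ ‖m j • (R j) x‖

set_option maxHeartbeats 1000000 in
/-- If `C(m,R)` holds and the Bessel fusion multiplier `M_{mR,V,W}` is
invertible, then `(W,ω)` and `(V,υ)` have the same excess:
`dim ker T*_{W,ω} = dim ker T*_{V,υ}`. -/
theorem excess_eq_of_invertible_multiplier_condC
    {H : Type*} [NormedAddCommGroup H] [InnerProductSpace ℂ H] [CompleteSpace H]
    [TopologicalSpace.SeparableSpace H]
    {I : Type*} [Countable I]
    (W V : I → Submodule ℂ H)
    (hW : ∀ i, IsClosed ((W i) : Set H)) (hV : ∀ i, IsClosed ((V i) : Set H))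
    (ω υ : I → ℝ)
    (hωseq : ∀ i, 0 ≤ ω i ∧ (ω i = 0 ↔ W i = ⊥))
    (hυseq : ∀ i, 0 ≤ υ i ∧ (υ i = 0 ↔ V i = ⊥))
    (βW βV : ℝ)
    (hWB : ∀ x : H, ∃ s : ℝ,
      HasSum (fun i => ω i ^ 2 * ‖fproj (W i) (hW i) x‖ ^ 2) s ∧ s ≤ βW * ‖x‖ ^ 2)
    (hVB : ∀ x : H, ∃ s : ℝ,
      HasSum (fun i => υ i ^ 2 * ‖fproj (V i) (hV i) x‖ ^ 2) s ∧ s ≤ βV * ‖x‖ ^ 2)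
    (m : I → ℂ) (hm : BddAbove (Set.range fun i => ‖m i‖))
    (R : I → H →L[ℂ] H) (hR : BddAbove (Set.range fun i => ‖R i‖))
    (γ δ : ℝ) (hC : CondC m R γ δ)
    -- the multiplier M_{mR,V,W} and its invertibility
    (M : H →L[ℂ] H)
    (hM : ∀ x : H, HasSum
      (fun i => m i • (υ i * ω i) • fproj (V i) (hV i) ((R i) (fproj (W i) (hW i) x))) (M x))
    (hMinv : ∃ N : H →L[ℂ] H, M ∘L N = 1 ∧ N ∘L M = 1)
    -- the synthesis operators of (W,ω) and (V,υ)
    (TW TV : lp (fun _ : I => H) 2 →L[ℂ] H)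
    (hTW : ∀ x : lp (fun _ : I => H) 2, HasSum (fun i => ω i • fproj (W i) (hW i) (x i)) (TW x))
    (hTV : ∀ x : lp (fun _ : I => H) 2, HasSum (fun i => υ i • fproj (V i) (hV i) (x i)) (TV x)) :
    Module.rank ℂ ↥(LinearMap.ker (TW : lp (fun _ : I => H) 2 →ₗ[ℂ] H)) = Module.rank ℂ ↥(LinearMap.ker (TV : lp (fun _ : I => H) 2 →ₗ[ℂ] H)) := by
  classical
  obtain ⟨hγ, hδ, hCc⟩ := hC
  obtain ⟨N, hMN, hNM⟩ := hMinv
  -- The family A i = m i • R i and its uniform bounds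
  set A : I → H →L[ℂ] H := fun i => m i • R i with hA
  obtain ⟨Cm, hCm⟩ := hm
  obtain ⟨Cr, hCr⟩ := hR
  have hCm' : ∀ i, ‖m i‖ ≤ Cm := fun i => hCm (Set.mem_range_self i)
  have hCr' : ∀ i, ‖R i‖ ≤ Cr := fun i => hCr (Set.mem_range_self i)
  have hAbound : ∀ i x, ‖A i x‖ ≤ (max Cm 0 * max Cr 0) * ‖x‖ := by
    intro i x
    calc ‖A i x‖ = ‖m i‖ * ‖R i x‖ := by rw [hA]; simp [norm_smul]
      _ ≤ max Cm 0 * (max Cr 0 * ‖x‖) := by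
          refine mul_le_mul (le_trans (hCm' i) (le_max_left _ _)) ?_ (norm_nonneg _)
            (le_trans (norm_nonneg _) (le_trans (hCm' i) (le_max_left _ _)))
          exact le_trans ((R i).le_opNorm x)
            (mul_le_mul_of_nonneg_right (le_trans (hCr' i) (le_max_left _ _)) (norm_nonneg _))
      _ = (max Cm 0 * max Cr 0) * ‖x‖ := by ring
  have hAlow : ∀ i x, γ * ‖x‖ ≤ ‖A i x‖ := fun i x => (hCc i x).2.2
  have hAadj : ∀ i x, γ * ‖x‖ ≤ ‖ContinuousLinearMap.adjoint (A i) x‖ := by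
    intro i x
    have h1 := (hCc i x).1
    have h2 : ContinuousLinearMap.adjoint (A i) =
        (starRingEnd ℂ) (m i) • ContinuousLinearMap.adjoint (R i) := by
      rw [hA]
      exact map_smulₛₗ (ContinuousLinearMap.adjoint :
        (H →L[ℂ] H) ≃ₗᵢ⋆[ℂ] (H →L[ℂ] H)) (m i) (R i)
    rw [h2]
    exact h1
  -- each A i is bijective
  have hbij : ∀ i, Function.Bijective (A i) := by
    intro i
    rw [ContinuousLinearMap.bijective_iff_dense_range_and_antilipschitz]
    refine ⟨?_, ⟨γ⁻¹.toNNReal, (A i).antilipschitz_of_bound (fun x => ?_)⟩⟩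
    · rw [Submodule.topologicalClosure_eq_top_iff, Submodule.eq_bot_iff]
      intro x hx
      have h1 : ContinuousLinearMap.adjoint (A i) x = 0 := by
        have h2 := hx (A i (ContinuousLinearMap.adjoint (A i) x))
          (LinearMap.mem_range_self _ _)
        rw [← ContinuousLinearMap.adjoint_inner_right] at h2
        exact inner_self_eq_zero.mp h2
      have h3 := hAadj i x
      rw [h1, norm_zero] at h3
      have h4 : ‖x‖ ≤ 0 := by nlinarith
      exact norm_le_zero_iff.mp h4
    · have h5 := hAlow i x
      rw [Real.coe_toNNReal _ (by positivity)]
      have h6 : γ⁻¹ * (γ * ‖x‖) ≤ γ⁻¹ * ‖A i x‖ :=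
        mul_le_mul_of_nonneg_left h5 (by positivity)
      rwa [inv_mul_cancel_left₀ hγ.ne'] at h6
  -- the inverses of the A i, as linear maps with a uniform bound
  set e : ∀ i, H ≃ₗ[ℂ] H := fun i => LinearEquiv.ofBijective ((A i) : H →ₗ[ℂ] H) (hbij i)
    with he
  have heapp : ∀ i x, e i x = A i x := fun i x => rfl
  have hinvbound : ∀ i y, ‖(e i).symm y‖ ≤ γ⁻¹ * ‖y‖ := by
    intro i y
    have h1 : γ * ‖(e i).symm y‖ ≤ ‖A i ((e i).symm y)‖ := hAlow i _
    rw [← heapp, (e i).apply_symm_apply] at h1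
    have h2 : γ⁻¹ * (γ * ‖(e i).symm y‖) ≤ γ⁻¹ * ‖y‖ :=
      mul_le_mul_of_nonneg_left h1 (by positivity)
    rwa [inv_mul_cancel_left₀ hγ.ne'] at h2
  -- the diagonal operators D and D'
  set D : lp (fun _ : I => H) 2 →L[ℂ] lp (fun _ : I => H) 2 :=
    opD (fun i => ((A i) : H →ₗ[ℂ] H)) (by positivity) (fun i x => hAbound i x) with hD
  set D' : lp (fun _ : I => H) 2 →L[ℂ] lp (fun _ : I => H) 2 :=
    opD (fun i => ((e i).symm : H →ₗ[ℂ] H)) (by positivity) hinvbound with hD'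
  have hDapp : ∀ x i, (D x) i = A i (x i) := fun x i => rfl
  have hD'app : ∀ x i, (D' x) i = (e i).symm (x i) := fun x i => rfl
  have hD'D : ∀ x, D' (D x) = x := by
    intro x
    refine lp.ext (funext fun i => ?_)
    rw [hD'app, hDapp, ← heapp, (e i).symm_apply_apply]
  have hDD' : ∀ x, D (D' x) = x := by
    intro x
    refine lp.ext (funext fun i => ?_)
    rw [hDapp, hD'app, ← heapp, (e i).apply_symm_apply]
  -- the adjoint of the analysis operator of (W, ω)
  set SW : H →L[ℂ] lp (fun _ : I => H) 2 :=
    synthAdj W hW ω (fun i => (hωseq i).1) hWB with hSW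
  have hSWapp : ∀ x i, (SW x) i = ω i • fproj (W i) (hW i) x := fun x i => rfl
  -- the key identity TV (D (SW y)) = M y
  have hKey : ∀ y, TV (D (SW y)) = M y := by
    intro y
    have h1 := hTV (D (SW y))
    have h2 : (fun i => υ i • fproj (V i) (hV i) ((D (SW y)) i)) =
        fun i => m i • (υ i * ω i) • fproj (V i) (hV i) ((R i) (fproj (W i) (hW i) y)) := by
      funext i
      rw [hDapp, hSWapp]
      have h3 : A i (ω i • fproj (W i) (hW i) y) =
          m i • (ω i • R i (fproj (W i) (hW i) y)) := by
        rw [hA]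
        simp only [ContinuousLinearMap.smul_apply]
        rw [(R i).map_smul_of_tower]
      rw [h3, (fproj (V i) (hV i)).map_smul, (fproj (V i) (hV i)).map_smul_of_tower,
        mul_smul, smul_comm (υ i) (m i)]
    rw [h2] at h1
    exact h1.unique (hM y)
  have hNMapp : ∀ y, N (M y) = y := by
    intro y
    have := ContinuousLinearMap.ext_iff.mp hNM y
    simpa using this
  have hMNapp : ∀ y, M (N y) = y := by
    intro y
    have := ContinuousLinearMap.ext_iff.mp hMN y
    simpa using this
  -- the idempotent E with range SW and kernel ker (TV ∘L D)
  set E : lp (fun _ : I => H) 2 →L[ℂ] lp (fun _ : I => H) 2 :=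
    SW ∘L N ∘L TV ∘L D with hE
  have hEapp : ∀ x, E x = SW (N (TV (D x))) := fun x => rfl
  have hESW : ∀ y, E (SW y) = SW y := by
    intro y
    rw [hEapp, hKey, hNMapp]
  have hrangeE : LinearMap.range (E : lp (fun _ : I => H) 2 →ₗ[ℂ] lp (fun _ : I => H) 2) = LinearMap.range (SW : H →ₗ[ℂ] lp (fun _ : I => H) 2) := by
    apply le_antisymm
    · rintro _ ⟨x, rfl⟩
      exact ⟨N (TV (D x)), rfl⟩
    · rintro _ ⟨y, rfl⟩
      exact ⟨SW y, hESW y⟩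
  have hTVDE : ∀ x, TV (D (E x)) = TV (D x) := by
    intro x
    rw [hEapp, hKey, hMNapp]
  have hkerE : LinearMap.ker (E : lp (fun _ : I => H) 2 →ₗ[ℂ] lp (fun _ : I => H) 2) = LinearMap.ker ((TV ∘L D : lp (fun _ : I => H) 2 →L[ℂ] H) : lp (fun _ : I => H) 2 →ₗ[ℂ] H) := by
    ext x
    simp only [LinearMap.mem_ker, ContinuousLinearMap.coe_coe, ContinuousLinearMap.coe_comp', Function.comp_apply]
    constructor
    · intro h
      have := hTVDE x
      rw [h, map_zero, map_zero] at this
      exact this.symm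
    · intro h
      rw [hEapp, h, map_zero, map_zero]
  -- E is an (algebraic) projection onto range SW
  have hproj : LinearMap.IsProj (LinearMap.range (SW : H →ₗ[ℂ] lp (fun _ : I => H) 2)) (E : lp (fun _ : I => H) 2 →ₗ[ℂ]
      lp (fun _ : I => H) 2) := by
    constructor
    · intro x
      exact ⟨N (TV (D x)), rfl⟩
    · rintro _ ⟨y, rfl⟩
      exact hESW y
  have hcompl1 : IsCompl (LinearMap.range (SW : H →ₗ[ℂ] lp (fun _ : I => H) 2)) (LinearMap.ker ((TV ∘L D : lp (fun _ : I => H) 2 →L[ℂ] H) : lp (fun _ : I => H) 2 →ₗ[ℂ] H)) := by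
    have h := hproj.isCompl
    rwa [show LinearMap.ker (E : lp (fun _ : I => H) 2 →ₗ[ℂ] lp (fun _ : I => H) 2) =
      LinearMap.ker ((TV ∘L D : lp (fun _ : I => H) 2 →L[ℂ] H) : lp (fun _ : I => H) 2 →ₗ[ℂ] H) from hkerE] at h
  -- SW is bounded below, hence has complete range
  have hSWanti : AntilipschitzWith ((‖N‖ * ‖TV‖ * ‖D‖).toNNReal) SW := by
    apply SW.antilipschitz_of_bound
    intro x
    rw [Real.coe_toNNReal _ (by positivity)]
    have h1 : ‖x‖ ≤ ‖N‖ * ‖M x‖ := by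
      conv_lhs => rw [← hNMapp x]
      exact N.le_opNorm _
    have h2 : ‖M x‖ ≤ ‖TV‖ * (‖D‖ * ‖SW x‖) := by
      rw [← hKey]
      exact le_trans (TV.le_opNorm _) (by gcongr; exact D.le_opNorm _)
    calc ‖x‖ ≤ ‖N‖ * (‖TV‖ * (‖D‖ * ‖SW x‖)) :=
          le_trans h1 (mul_le_mul_of_nonneg_left h2 (norm_nonneg _))
      _ = ‖N‖ * ‖TV‖ * ‖D‖ * ‖SW x‖ := by ring
  haveI : CompleteSpace (LinearMap.range (SW : H →ₗ[ℂ] lp (fun _ : I => H) 2)) := hSWanti.completeSpace_range_clm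
  -- TW is the adjoint of SW
  have hadj : ∀ (y : H) (x : lp (fun _ : I => H) 2),
      (inner ℂ (SW y) x : ℂ) = inner ℂ y (TW x) := by
    intro y x
    have h1 : HasSum (fun i => (inner ℂ ((SW y) i) (x i) : ℂ)) (inner ℂ (SW y) x) :=
      lp.hasSum_inner (SW y) x
    have h2 : HasSum (fun i => (inner ℂ y (ω i • fproj (W i) (hW i) (x i)) : ℂ))
        (inner ℂ y (TW x)) := (hTW x).mapL (innerSL ℂ y)
    refine h1.unique (h2.congr_fun fun i => ?_)
    rw [hSWapp, RCLike.real_smul_eq_coe_smul (K := ℂ) (ω i), inner_smul_real_left,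
      fproj_inner_s11, ← inner_smul_real_right, ← RCLike.real_smul_eq_coe_smul (K := ℂ)]
  -- hence ker TW is the orthogonal complement of range SW
  have hkerTW : LinearMap.ker (TW : lp (fun _ : I => H) 2 →ₗ[ℂ] H) = (LinearMap.range (SW : H →ₗ[ℂ] lp (fun _ : I => H) 2))ᗮ := by
    ext x
    simp only [LinearMap.mem_ker, ContinuousLinearMap.coe_coe, Submodule.mem_orthogonal]
    constructor
    · rintro h u ⟨y, rfl⟩
      rw [ContinuousLinearMap.coe_coe, hadj, h, inner_zero_right]
    · intro h
      have h2 := h (SW (TW x)) ⟨TW x, rfl⟩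
      rw [hadj] at h2
      exact inner_self_eq_zero.mp h2
  have hcompl2 : IsCompl (LinearMap.range (SW : H →ₗ[ℂ] lp (fun _ : I => H) 2)) (LinearMap.ker (TW : lp (fun _ : I => H) 2 →ₗ[ℂ] H)) := by
    rw [hkerTW]
    exact Submodule.isCompl_orthogonal_of_hasOrthogonalProjection
  -- assemble the linear equivalences
  have eW : (lp (fun _ : I => H) 2 ⧸ LinearMap.range (SW : H →ₗ[ℂ] lp (fun _ : I => H) 2)) ≃ₗ[ℂ] LinearMap.ker (TW : lp (fun _ : I => H) 2 →ₗ[ℂ] H) :=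
    (LinearMap.range (SW : H →ₗ[ℂ] lp (fun _ : I => H) 2)).quotientEquivOfIsCompl _ hcompl2
  have eV : (lp (fun _ : I => H) 2 ⧸ LinearMap.range (SW : H →ₗ[ℂ] lp (fun _ : I => H) 2)) ≃ₗ[ℂ] LinearMap.ker ((TV ∘L D : lp (fun _ : I => H) 2 →L[ℂ] H) : lp (fun _ : I => H) 2 →ₗ[ℂ] H) :=
    (LinearMap.range (SW : H →ₗ[ℂ] lp (fun _ : I => H) 2)).quotientEquivOfIsCompl _ hcompl1
  have eD : (LinearMap.ker ((TV ∘L D : lp (fun _ : I => H) 2 →L[ℂ] H) : lp (fun _ : I => H) 2 →ₗ[ℂ] H)) ≃ₗ[ℂ] LinearMap.ker (TV : lp (fun _ : I => H) 2 →ₗ[ℂ] H) :=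
    { toFun := fun x => ⟨D x.1, by
        have h := x.2
        simp only [LinearMap.mem_ker, ContinuousLinearMap.coe_coe, ContinuousLinearMap.coe_comp',
          Function.comp_apply] at h ⊢
        exact h⟩
      map_add' := fun a b => Subtype.ext (map_add D a.1 b.1)
      map_smul' := fun c a => Subtype.ext (map_smul D c a.1)
      invFun := fun y => ⟨D' y.1, by
        have h := y.2
        simp only [LinearMap.mem_ker, ContinuousLinearMap.coe_coe, ContinuousLinearMap.coe_comp',
          Function.comp_apply] at h ⊢
        rw [hDD', h]⟩
      left_inv := fun a => Subtype.ext (hD'D a.1)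
      right_inv := fun b => Subtype.ext (hDD' b.1) }
  exact ((eW.symm.trans eV).trans eD).rank_eq
end
end
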